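/- Fix k ≥ 2, μ > 0, σ > 0 and class priors p_1, …, p_k > 0 with Σ_{c=1}^k p_c = 1. Let m be an index with p_m = min_c p_c and M an index with p_M = max_c p_c. Set snr = μ²/σ², α_c = μ p_c/(μ² p_c + σ²), t* = α_m, and α_c^{Spec}(t) = min(t, α_c). Let α^{NGF} : [0, t*] → ℝ^k be any differentiable function with α^{NGF}(0) = 0 satisfying, for all t ∈ [0, t*] and all i, (d/dt) α_i^{NGF}(t) = r_i(t)/R(t), where r_i(t) = μ p_i − (μ² p_i + σ²) α_i^{NGF}(t) and R(t) = sqrt(Σ_{j=1}^k r_j(t)²) > 0. For a trajectory α define L_c(α, t) = ½ (1 − μ α_c(t))² + ½ σ² Σ_{j=1}^k α_j(t)² and L_bal(α, t) = (1/k) Σ_{c=1}^k L_c(α, t). Assume p_m < 1/(snr + 2k) and p_M − p_m ≥ 2 (p_m·snr + 1)² / (k (1 − p_m(snr + 2k))). Then for every t ∈ (0, t*], L_bal(α^{NGF}, t) − L_bal(α^{Spec}, t) ≥ μ t / 2. -/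

import Mathlib

/-- Spectral-gradient-flow trajectory of the spectral component with prior `pc`:
`α_c^{Spec}(t) = min(t, α_c)` with `α_c = μ p_c/(μ² p_c + σ²)`. -/
noncomputable def alphaSpec (μ σ pc t : ℝ) : ℝ :=
  min t (μ * pc / (μ ^ 2 * pc + σ ^ 2))

/-- Per-class population loss of a trajectory `α`:
`L_c(α, t) = ½ (1 − μ α_c(t))² + ½ σ² Σ_j α_j(t)²`. -/
noncomputable def classLoss {k : ℕ} (μ σ : ℝ) (α : Fin k → ℝ → ℝ) (c : Fin k) (t : ℝ) : ℝ :=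
  (1 / 2) * (1 - μ * α c t) ^ 2 + (1 / 2) * σ ^ 2 * ∑ j, (α j t) ^ 2

/-- Balanced population loss: `L_bal(α, t) = (1/k) Σ_c L_c(α, t)`. -/
noncomputable def balancedLoss {k : ℕ} (μ σ : ℝ) (α : Fin k → ℝ → ℝ) (t : ℝ) : ℝ :=
  (1 / (k : ℝ)) * ∑ c, classLoss μ σ α c t

set_option maxHeartbeats 2000000

/-- balanced-loss part of Theorem 2, full version. Comparison of
normalized gradient flow (NGF) with spectral gradient flow: if `α^{NGF}` is a differentiable
trajectory on `[0, t*]` starting at `0` that solves the NGF ODE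
`α_i′ = r_i/R` with `r_i(t) = μ p_i − (μ² p_i + σ²) α_i(t)` and `R = sqrt(Σ_j r_j²) > 0`,
and the stated hypotheses on `p_m`, `p_M` hold, then for every `t ∈ (0, t*]` the balanced
loss of NGF exceeds that of SpecGF by at least `μ t / 2`. -/
theorem stmt9 (k : ℕ) (hk : 2 ≤ k) (μ σ : ℝ) (hμ : 0 < μ) (hσ : 0 < σ)
    (p : Fin k → ℝ) (hp : ∀ c, 0 < p c) (hsum : ∑ c, p c = 1)
    (m M : Fin k) (hm : ∀ c, p m ≤ p c) (hM : ∀ c, p c ≤ p M)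
    (snr : ℝ) (hsnr : snr = μ ^ 2 / σ ^ 2)
    (tstar : ℝ) (htstar : tstar = μ * p m / (μ ^ 2 * p m + σ ^ 2))
    (α : ℝ → Fin k → ℝ) (hα0 : ∀ i, α 0 i = 0)
    (r : ℝ → Fin k → ℝ)
    (hr : ∀ t i, r t i = μ * p i - (μ ^ 2 * p i + σ ^ 2) * α t i)
    (R : ℝ → ℝ) (hR : ∀ t, R t = Real.sqrt (∑ j, (r t j) ^ 2))
    (hRpos : ∀ t ∈ Set.Icc (0 : ℝ) tstar, 0 < R t)
    (hode : ∀ t ∈ Set.Icc (0 : ℝ) tstar, ∀ i,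
      HasDerivWithinAt (fun s => α s i) (r t i / R t) (Set.Icc (0 : ℝ) tstar) t)
    (hpm : p m < 1 / (snr + 2 * k))
    (hgap : p M - p m ≥ 2 * (p m * snr + 1) ^ 2 / (k * (1 - p m * (snr + 2 * k)))) :
    ∀ t : ℝ, 0 < t → t ≤ tstar →
      balancedLoss μ σ (fun c s => α s c) t
          - balancedLoss μ σ (fun c => alphaSpec μ σ (p c)) t ≥ μ * t / 2 := by
  intro t ht0 htT
  subst hsnr
  have hK2 : (2:ℝ) ≤ (k:ℝ) := by exact_mod_cast hk
  have hK0 : (0:ℝ) < (k:ℝ) := by linarith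
  have hKne : (k:ℝ) ≠ 0 := ne_of_gt hK0
  have hσ2 : (0:ℝ) < σ ^ 2 := by positivity
  set q := p m with hqdef
  have hq0 : 0 < q := hp m
  have hPm : (0:ℝ) < μ ^ 2 * q + σ ^ 2 := by positivity
  -- cleared form of hpm
  have hsnr_nn : (0:ℝ) ≤ μ ^ 2 / σ ^ 2 := by positivity
  have h1pos : (0:ℝ) < μ ^ 2 / σ ^ 2 + 2 * (k:ℝ) := by linarith
  have hx1 : q * (μ ^ 2 / σ ^ 2 + 2 * (k:ℝ)) < 1 := by
    have := mul_lt_mul_of_pos_right hpm h1pos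
    rwa [one_div, inv_mul_cancel₀ (ne_of_gt h1pos)] at this
  have hden : (0:ℝ) < (k:ℝ) * (1 - q * (μ ^ 2 / σ ^ 2 + 2 * (k:ℝ))) := by
    have h : (0:ℝ) < 1 - q * (μ ^ 2 / σ ^ 2 + 2 * (k:ℝ)) := by linarith
    exact mul_pos hK0 h
  have h5 : 2 * (q * (μ ^ 2 / σ ^ 2) + 1) ^ 2
      ≤ (p M - q) * ((k:ℝ) * (1 - q * (μ ^ 2 / σ ^ 2 + 2 * (k:ℝ)))) := by
    rw [ge_iff_le, div_le_iff₀ hden] at hgap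
    exact hgap
  have hD : 0 < p M - q := by
    nlinarith [h5, hden, mul_nonneg hq0.le hsnr_nn, sq_nonneg (q * (μ ^ 2 / σ ^ 2))]
  set D := p M - q with hDdef
  have hDne : D ≠ 0 := ne_of_gt hD
  have hσne : σ ≠ 0 := ne_of_gt hσ
  have hTnn : (0:ℝ) ≤ tstar := le_trans ht0.le htT
  have hmem : t ∈ Set.Icc (0:ℝ) tstar := ⟨ht0.le, htT⟩
  -- Step A: |α x c| ≤ x on [0, tstar]
  have habs : ∀ x ∈ Set.Icc (0:ℝ) tstar, ∀ c, |α x c| ≤ x := by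
    intro x hx c
    have hb : ∀ y ∈ Set.Ico (0:ℝ) tstar, ‖r y c / R y‖ ≤ 1 := by
      intro y hy
      have hy' : y ∈ Set.Icc (0:ℝ) tstar := Set.Ico_subset_Icc_self hy
      have hRy := hRpos y hy'
      rw [Real.norm_eq_abs, abs_div, abs_of_pos hRy, div_le_one hRy]
      calc |r y c| = Real.sqrt ((r y c) ^ 2) := (Real.sqrt_sq_eq_abs _).symm
        _ ≤ Real.sqrt (∑ j, (r y j) ^ 2) := Real.sqrt_le_sqrt
            (Finset.single_le_sum (f := fun j => (r y j) ^ 2)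
              (fun j _ => sq_nonneg _) (Finset.mem_univ c))
        _ = R y := (hR y).symm
    have := norm_image_sub_le_of_norm_deriv_le_segment'
      (f' := fun y => r y c / R y) (fun y hy => hode y hy c) hb x hx
    simpa [hα0, Real.norm_eq_abs] using this
  -- Step B: lower bound on r
  have hrlow : ∀ x ∈ Set.Icc (0:ℝ) tstar, ∀ c,
      μ * σ ^ 2 * (p c - q) / (μ ^ 2 * q + σ ^ 2) ≤ r x c := by
    intro x hx c
    have hac : α x c ≤ tstar := le_trans (le_trans (le_abs_self _) (habs x hx c)) hx.2
    have hPc : (0:ℝ) < μ ^ 2 * p c + σ ^ 2 := by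
      nlinarith [mul_nonneg (sq_nonneg μ) (hp c).le, hσ2]
    have h1 : (μ ^ 2 * p c + σ ^ 2) * α x c
        ≤ (μ ^ 2 * p c + σ ^ 2) * (μ * q / (μ ^ 2 * q + σ ^ 2)) := by
      apply mul_le_mul_of_nonneg_left _ hPc.le
      rw [← htstar]; exact hac
    have h2 : μ * σ ^ 2 * (p c - q) / (μ ^ 2 * q + σ ^ 2)
        = μ * p c - (μ ^ 2 * p c + σ ^ 2) * (μ * q / (μ ^ 2 * q + σ ^ 2)) := by
      field_simp; ring
    rw [hr x c]
    linarith [h1, h2.le, h2.ge]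
  have hrnn : ∀ x ∈ Set.Icc (0:ℝ) tstar, ∀ c, 0 ≤ r x c := by
    intro x hx c
    refine le_trans (div_nonneg ?_ hPm.le) (hrlow x hx c)
    exact mul_nonneg (mul_nonneg hμ.le hσ2.le) (sub_nonneg.mpr (hm c))
  -- Step C: α nonneg
  have hαnn : ∀ x ∈ Set.Icc (0:ℝ) tstar, ∀ c, 0 ≤ α x c := by
    intro x hx c
    have hmono : MonotoneOn (fun s => α s c) (Set.Icc (0:ℝ) tstar) := by
      apply monotoneOn_of_hasDerivWithinAt_nonneg (convex_Icc _ _)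
        (f' := fun y => r y c / R y)
      · exact fun y hy => (hode y hy c).continuousWithinAt
      · intro y hy
        exact (hode y (interior_subset hy) c).mono interior_subset
      · intro y hy
        have hy' : y ∈ Set.Icc (0:ℝ) tstar := interior_subset hy
        exact div_nonneg (hrnn y hy' c) (hRpos y hy').le
    have h0 : (0:ℝ) ∈ Set.Icc (0:ℝ) tstar := Set.left_mem_Icc.mpr hTnn
    have := hmono h0 hx hx.1
    simpa [hα0] using this
  -- Step D/E/F: bound S = ∑ α t c
  set B : ℝ := (μ ^ 2 * q + σ ^ 2) / (σ ^ 2 * D) with hBdef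
  have hSbound : (∑ c, α t c) ≤ B * t := by
    have hf : ∀ y ∈ Set.Icc (0:ℝ) tstar,
        HasDerivWithinAt (fun s => ∑ c, α s c) (∑ c, r y c / R y)
          (Set.Icc (0:ℝ) tstar) y :=
      fun y hy => HasDerivWithinAt.fun_sum (fun c _ => hode y hy c)
    have hb : ∀ y ∈ Set.Ico (0:ℝ) tstar, ‖∑ c, r y c / R y‖ ≤ B := by
      intro y hy
      have hy' : y ∈ Set.Icc (0:ℝ) tstar := Set.Ico_subset_Icc_self hy
      have hRy := hRpos y hy'
      have hnn : 0 ≤ ∑ c, r y c / R y :=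
        Finset.sum_nonneg fun c _ => div_nonneg (hrnn y hy' c) hRy.le
      have hup1 : (∑ c, r y c) ≤ μ := by
        have hterm : ∀ c, r y c ≤ μ * p c := by
          intro c
          rw [hr y c]
          have : 0 ≤ (μ ^ 2 * p c + σ ^ 2) * α y c :=
            mul_nonneg (by nlinarith [mul_nonneg (sq_nonneg μ) (hp c).le, hσ2]) (hαnn y hy' c)
          linarith
        calc (∑ c, r y c) ≤ ∑ c, μ * p c := Finset.sum_le_sum (fun c _ => hterm c)
          _ = μ := by rw [← Finset.mul_sum, hsum, mul_one]
      have hLM0 : (0:ℝ) < μ * σ ^ 2 * D / (μ ^ 2 * q + σ ^ 2) := by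
        apply div_pos _ hPm
        exact mul_pos (mul_pos hμ hσ2) hD
      have hRlow : μ * σ ^ 2 * D / (μ ^ 2 * q + σ ^ 2) ≤ R y := by
        calc μ * σ ^ 2 * D / (μ ^ 2 * q + σ ^ 2)
            = μ * σ ^ 2 * (p M - q) / (μ ^ 2 * q + σ ^ 2) := by rw [hDdef]
          _ ≤ r y M := hrlow y hy' M
          _ ≤ |r y M| := le_abs_self _
          _ = Real.sqrt ((r y M) ^ 2) := (Real.sqrt_sq_eq_abs _).symm
          _ ≤ Real.sqrt (∑ j, (r y j) ^ 2) := Real.sqrt_le_sqrt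
              (Finset.single_le_sum (f := fun j => (r y j) ^ 2)
                (fun j _ => sq_nonneg _) (Finset.mem_univ M))
          _ = R y := (hR y).symm
      rw [Real.norm_eq_abs, abs_of_nonneg hnn, ← Finset.sum_div]
      calc (∑ c, r y c) / R y ≤ μ / (μ * σ ^ 2 * D / (μ ^ 2 * q + σ ^ 2)) :=
            div_le_div₀ hμ.le hup1 hLM0 hRlow
        _ = B := by rw [hBdef]; field_simp
    have := norm_image_sub_le_of_norm_deriv_le_segment' hf hb t hmem
    have hz : (∑ c, α 0 c) = 0 := by simp [hα0]
    rw [Real.norm_eq_abs, hz, sub_zero, sub_zero] at this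
    exact le_trans (le_abs_self _) this
  set S : ℝ := ∑ c, α t c with hSdef
  have hSnn : 0 ≤ S := Finset.sum_nonneg fun c _ => hαnn t hmem c
  -- cleared inequalities
  have he1 : S * (σ ^ 2 * D) ≤ (μ ^ 2 * q + σ ^ 2) * t := by
    have h := mul_le_mul_of_nonneg_right hSbound
      (le_of_lt (mul_pos hσ2 hD))
    have hB : B * t * (σ ^ 2 * D) = (μ ^ 2 * q + σ ^ 2) * t := by
      rw [hBdef]; field_simp
    linarith [h, hB.le, hB.ge]
  have he2 : t * (μ ^ 2 * q + σ ^ 2) ≤ μ * q := by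
    rw [htstar] at htT
    exact (le_div_iff₀ hPm).mp htT
  have he3 : 2 * (μ ^ 2 * q + σ ^ 2) ^ 2
      ≤ (k:ℝ) * σ ^ 2 * D * (σ ^ 2 - q * (μ ^ 2 + 2 * (k:ℝ) * σ ^ 2)) := by
    have hid1 : (q * (μ ^ 2 / σ ^ 2) + 1) * σ ^ 2 = μ ^ 2 * q + σ ^ 2 := by
      field_simp
    have hid2 : (1 - q * (μ ^ 2 / σ ^ 2 + 2 * (k:ℝ))) * σ ^ 2
        = σ ^ 2 - q * (μ ^ 2 + 2 * (k:ℝ) * σ ^ 2) := by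
      field_simp
    have h6 := mul_le_mul_of_nonneg_right h5 (by positivity : (0:ℝ) ≤ σ ^ 2 * σ ^ 2)
    calc 2 * (μ ^ 2 * q + σ ^ 2) ^ 2
        = 2 * (q * (μ ^ 2 / σ ^ 2) + 1) ^ 2 * (σ ^ 2 * σ ^ 2) := by
          rw [← hid1]; ring
      _ ≤ D * ((k:ℝ) * (1 - q * (μ ^ 2 / σ ^ 2 + 2 * (k:ℝ)))) * (σ ^ 2 * σ ^ 2) := h6
      _ = (k:ℝ) * σ ^ 2 * D * ((1 - q * (μ ^ 2 / σ ^ 2 + 2 * (k:ℝ))) * σ ^ 2) := by ring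
      _ = (k:ℝ) * σ ^ 2 * D * (σ ^ 2 - q * (μ ^ 2 + 2 * (k:ℝ) * σ ^ 2)) := by rw [hid2]
  -- key polynomial inequality
  have key : 2 * μ * S + (k:ℝ) * (μ ^ 2 + (k:ℝ) * σ ^ 2) * t ^ 2 ≤ (k:ℝ) * μ * t := by
    have c1 : (0:ℝ) ≤ 2 * μ * (μ ^ 2 * q + σ ^ 2) := by positivity
    have hm1 := mul_le_mul_of_nonneg_left he1 c1
    have c2 : (0:ℝ) ≤ μ * t := mul_nonneg hμ.le ht0.le
    have hm2 := mul_le_mul_of_nonneg_left he3 c2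
    have c3 : (0:ℝ) ≤ (k:ℝ) * (μ ^ 2 + (k:ℝ) * σ ^ 2) * t * (σ ^ 2 * D) :=
      mul_nonneg (mul_nonneg (mul_nonneg hK0.le (by positivity)) ht0.le)
        (mul_nonneg hσ2.le hD.le)
    have hm3 := mul_le_mul_of_nonneg_left he2 c3
    have c4 : (0:ℝ) ≤ μ * t * (k:ℝ) * σ ^ 2 * D :=
      mul_nonneg (mul_nonneg (mul_nonneg c2 hK0.le) hσ2.le) hD.le
    have hin : σ ^ 2 - (k:ℝ) * q * σ ^ 2 ≤ μ ^ 2 * q + σ ^ 2 := by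
      nlinarith [mul_nonneg hq0.le (by positivity : (0:ℝ) ≤ μ ^ 2 + (k:ℝ) * σ ^ 2)]
    have hm4 := mul_le_mul_of_nonneg_left hin c4
    have hpos : (0:ℝ) < σ ^ 2 * D * (μ ^ 2 * q + σ ^ 2) :=
      mul_pos (mul_pos hσ2 hD) hPm
    have W : (2 * μ * S + (k:ℝ) * (μ ^ 2 + (k:ℝ) * σ ^ 2) * t ^ 2)
          * (σ ^ 2 * D * (μ ^ 2 * q + σ ^ 2))
        ≤ ((k:ℝ) * μ * t) * (σ ^ 2 * D * (μ ^ 2 * q + σ ^ 2)) := by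
      linarith [hm1, hm2, hm3, hm4]
    exact le_of_mul_le_mul_right W hpos
  -- spec trajectory equals t on [0, tstar]
  have hαc : ∀ c, alphaSpec μ σ (p c) t = t := by
    intro c
    have hPc : (0:ℝ) < μ ^ 2 * p c + σ ^ 2 := by
      nlinarith [mul_nonneg (sq_nonneg μ) (hp c).le, hσ2]
    apply min_eq_left
    calc t ≤ tstar := htT
      _ ≤ μ * p c / (μ ^ 2 * p c + σ ^ 2) := by
          rw [htstar, div_le_div_iff₀ hPm hPc]
          nlinarith [mul_le_mul_of_nonneg_left (hm c) (mul_nonneg hμ.le hσ2.le)]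
  have hspec : balancedLoss μ σ (fun c => alphaSpec μ σ (p c)) t
      = (1 / 2) * (1 - μ * t) ^ 2 + (1 / 2) * σ ^ 2 * ((k:ℝ) * t ^ 2) := by
    have hsum_t2 : (∑ _j : Fin k, t ^ 2) = (k:ℝ) * t ^ 2 := by
      rw [Finset.sum_const, Finset.card_univ, Fintype.card_fin, nsmul_eq_mul]
    simp only [balancedLoss, classLoss, hαc, hsum_t2]
    rw [Finset.sum_const, Finset.card_univ, Fintype.card_fin, nsmul_eq_mul]
    field_simp
  -- NGF lower bound
  have hngf : 1 / 2 - μ * S / (k:ℝ) ≤ balancedLoss μ σ (fun c s => α s c) t := by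
    have hQnn : (0:ℝ) ≤ ∑ j, (α t j) ^ 2 := Finset.sum_nonneg fun j _ => sq_nonneg _
    have h2 : (∑ c : Fin k, ((1:ℝ) / 2 - μ * α t c))
        ≤ ∑ c : Fin k, ((1 / 2) * (1 - μ * α t c) ^ 2 + (1 / 2) * σ ^ 2 * ∑ j, (α t j) ^ 2) := by
      apply Finset.sum_le_sum
      intro c _
      nlinarith [sq_nonneg (μ * α t c), hQnn, hσ2]
    have h3 : (∑ c : Fin k, ((1:ℝ) / 2 - μ * α t c)) = (k:ℝ) / 2 - μ * S := by
      rw [Finset.sum_sub_distrib, Finset.sum_const, Finset.card_univ, Fintype.card_fin,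
        nsmul_eq_mul, ← Finset.mul_sum, hSdef]
      ring
    have h4 : (1 / (k:ℝ)) * ((k:ℝ) / 2 - μ * S)
        ≤ (1 / (k:ℝ)) * ∑ c, classLoss μ σ (fun c s => α s c) c t := by
      apply mul_le_mul_of_nonneg_left _ (by positivity)
      rw [← h3]
      simp only [classLoss]
      exact h2
    have h6 : (1 / (k:ℝ)) * ((k:ℝ) / 2 - μ * S) = 1 / 2 - μ * S / (k:ℝ) := by
      field_simp
    calc 1 / 2 - μ * S / (k:ℝ) = (1 / (k:ℝ)) * ((k:ℝ) / 2 - μ * S) := h6.symm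
      _ ≤ (1 / (k:ℝ)) * ∑ c, classLoss μ σ (fun c s => α s c) c t := h4
      _ = balancedLoss μ σ (fun c s => α s c) t := rfl
  -- finish
  have hfin : μ * S / (k:ℝ) ≤ (μ * t - (μ ^ 2 + (k:ℝ) * σ ^ 2) * t ^ 2) / 2 := by
    rw [div_le_div_iff₀ hK0 two_pos]
    nlinarith [key]
  have hgoal : 1 / 2 - μ * S / (k:ℝ)
      - ((1 / 2) * (1 - μ * t) ^ 2 + (1 / 2) * σ ^ 2 * ((k:ℝ) * t ^ 2)) ≥ μ * t / 2 := by
    nlinarith [hfin]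
  calc balancedLoss μ σ (fun c s => α s c) t
        - balancedLoss μ σ (fun c => alphaSpec μ σ (p c)) t
      ≥ (1 / 2 - μ * S / (k:ℝ))
        - ((1 / 2) * (1 - μ * t) ^ 2 + (1 / 2) * σ ^ 2 * ((k:ℝ) * t ^ 2)) := by
        rw [hspec]; linarith [hngf]
    _ ≥ μ * t / 2 := hgoal
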